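/- arXiv:1802.09572 — 2 statements merged into one kernel-verified Lean document; each statement's English description precedes it below -/
import Mathlib

section
/- Let n ≥ 2, q ≠ 0, let φ:(0,∞)→(0,∞) be continuous with φ_q(t) := φ(t^{1/q}) strictly convex, and let ρ_K, ρ_L, ρ_Q ∈ C(S^{n-1}) be strictly positive. Suppose Ṽ_{q,φ}(K,M,Q) = Ṽ_{q,φ}(L,M,Q) for every star body M (i.e., every strictly positive ρ_M ∈ C(S^{n-1})). Then ρ_K = ρ_L, i.e., K = L. -/
open MeasureTheory Metric Set Filter
open scoped RealInnerProductSpace NNReal ENNReal Topology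

noncomputable section

abbrev Euc (n : ℕ) := EuclideanSpace ℝ (Fin n)

def usphere (n : ℕ) : Set (Euc n) := Metric.sphere 0 1

def smeas (n : ℕ) : Measure (Euc n) := (μH[(n : ℝ) - 1]).restrict (usphere n)


def Vq (n : ℕ) (q : ℝ) (ρK ρQ : Euc n → ℝ) : ℝ :=
  (1/(n:ℝ)) * ∫ u, ρK u ^ q * ρQ u ^ ((n:ℝ) - q) ∂smeas n

def Vqφ (n : ℕ) (q : ℝ) (φ : ℝ → ℝ) (ρK ρL ρQ : Euc n → ℝ) : ℝ :=
  (1/(n:ℝ)) * ∫ u, φ (ρL u / ρK u) * ρK u ^ q * ρQ u ^ ((n:ℝ) - q) ∂smeas n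


lemma euc_bounded_finite {m : ℕ} {s : Set (Euc m)} (hs : Bornology.IsBounded s) :
    μH[(m:ℝ)] s < ⊤ := by
  set e := WithLp.equiv 2 (Fin m → ℝ) with he
  have hlip : LipschitzWith ((Fintype.card (Fin m) : NNReal) ^ (1/(2:ℝ≥0∞)).toReal) ⇑e.symm :=
    (PiLp.antilipschitzWith_ofLp 2 (fun _ : Fin m => ℝ)).to_rightInverse fun x => e.apply_symm_apply x
  have h1 : s = e.symm '' (e '' s) := by
    rw [Set.image_image]; simp
  rw [h1]
  calc μH[(m:ℝ)] (e.symm '' (e '' s)) ≤ _ * μH[(m:ℝ)] (e '' s) :=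
        hlip.hausdorffMeasure_image_le (by positivity) _
    _ < ⊤ := by
        rw [show ((m:ℝ)) = ((Fintype.card (Fin m) : ℕ) : ℝ) by simp,
          hausdorffMeasure_pi_real]
        exact ENNReal.mul_lt_top (ENNReal.rpow_lt_top_of_nonneg (by positivity) ENNReal.coe_ne_top) ((PiLp.lipschitzWith_ofLp 2 _).isBounded_image hs).measure_lt_top

lemma euc_ball_pos {m : ℕ} (z : Euc m) {δ : ℝ} (hδ : 0 < δ) :
    0 < μH[(m:ℝ)] (ball z δ) := by
  set e := WithLp.equiv 2 (Fin m → ℝ) with he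
  set K := ((Fintype.card (Fin m) : NNReal) ^ (1/(2:ℝ≥0∞)).toReal) with hK
  have hanti := PiLp.antilipschitzWith_ofLp 2 (fun _ : Fin m => ℝ)
  have hsub : ball (e z) (δ / (K + 1)) ⊆ e '' ball z δ := by
    intro y hy
    refine ⟨e.symm y, ?_, by simp⟩
    have h1 : dist (e.symm y) z ≤ K * dist (e (e.symm y)) (e z) := hanti.le_mul_dist _ _
    rw [e.apply_symm_apply] at h1
    have h2 : dist y (e z) < δ / (K + 1) := hy
    have hKpos : (0:ℝ) < K + 1 := by positivity
    have : (K:ℝ) * dist y (e z) < δ := by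
      calc (K:ℝ) * dist y (e z) ≤ (K+1) * dist y (e z) := by
            apply mul_le_mul_of_nonneg_right _ dist_nonneg
            simp
        _ < (K+1) * (δ / (K+1)) := by
            apply mul_lt_mul_of_pos_left h2 hKpos
        _ = δ := by field_simp
    exact lt_of_le_of_lt h1 this
  have h3 : μH[(m:ℝ)] (e '' ball z δ) ≤ 1 ^ (m:ℝ) * μH[(m:ℝ)] (ball z δ) :=
    (PiLp.lipschitzWith_ofLp 2 _).hausdorffMeasure_image_le (by positivity) _
  rw [ENNReal.one_rpow, one_mul] at h3
  refine lt_of_lt_of_le (lt_of_lt_of_le ?_ (measure_mono hsub)) h3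
  rw [show ((m:ℝ)) = ((Fintype.card (Fin m) : ℕ) : ℝ) by simp, hausdorffMeasure_pi_real]
  exact measure_ball_pos _ _ (by positivity)



noncomputable def eproj {m : ℕ} (i : Fin (m+1)) (x : Euc (m+1)) : Euc m := WithLp.toLp 2 (fun j => x (i.succAbove j))
noncomputable def egr {m : ℕ} (i : Fin (m+1)) (σ : ℝ) (z : Euc m) : Euc (m+1) :=
  WithLp.toLp 2 (i.insertNth (σ * Real.sqrt (1 - ‖z‖^2)) z.ofLp)

example {m : ℕ} (i : Fin (m+1)) (x y : Euc (m+1)) : dist (eproj i x) (eproj i y) ≤ dist x y := by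
  rw [EuclideanSpace.dist_eq, EuclideanSpace.dist_eq]
  apply Real.sqrt_le_sqrt
  rw [Fin.sum_univ_succAbove (fun k => dist (x k) (y k) ^ 2) i]
  have : ∀ j, dist (eproj i x j) (eproj i y j) = dist (x (i.succAbove j)) (y (i.succAbove j)) := fun j => rfl
  simp only [this]
  exact le_add_of_nonneg_left (by positivity)

lemma eproj_lip {m : ℕ} (i : Fin (m+1)) : LipschitzWith 1 (eproj i) := by
  apply LipschitzWith.of_dist_le_mul
  intro x y
  rw [NNReal.coe_one, one_mul, EuclideanSpace.dist_eq, EuclideanSpace.dist_eq]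
  apply Real.sqrt_le_sqrt
  rw [Fin.sum_univ_succAbove (fun k => dist (x k) (y k) ^ 2) i]
  exact le_add_of_nonneg_left (by positivity)

lemma egr_norm {m : ℕ} (i : Fin (m+1)) (σ : ℝ) (hσ : σ = 1 ∨ σ = -1) (z : Euc m)
    (hz : ‖z‖ ≤ 1) : egr i σ z ∈ sphere (0 : Euc (m+1)) 1 := by
  rw [mem_sphere_zero_iff_norm, EuclideanSpace.norm_eq]
  rw [Fin.sum_univ_succAbove (fun k => ‖egr i σ z k‖^2) i]
  have h1 : egr i σ z i = σ * Real.sqrt (1 - ‖z‖^2) := by unfold egr; rw [WithLp.ofLp_toLp]; exact Fin.insertNth_apply_same i _ _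
  have h2 : ∀ j, egr i σ z (i.succAbove j) = z j := fun j => by unfold egr; rw [WithLp.ofLp_toLp]; exact Fin.insertNth_apply_succAbove i _ _ j
  simp only [h1, h2]
  have hs : σ^2 = 1 := by rcases hσ with h|h <;> simp [h]
  have hnn : 0 ≤ 1 - ‖z‖^2 := by nlinarith [norm_nonneg z]
  have : ‖σ * Real.sqrt (1 - ‖z‖^2)‖^2 = 1 - ‖z‖^2 := by
    rw [norm_mul, mul_pow, Real.norm_eq_abs, Real.norm_eq_abs, sq_abs, sq_abs,
      Real.sq_sqrt hnn, hs, one_mul]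
  rw [this]
  have hz2 : ∑ j : Fin m, ‖z j‖^2 = ‖z‖^2 := by
    rw [EuclideanSpace.norm_eq, Real.sq_sqrt (by positivity)]
  rw [hz2]
  simp

lemma dist_egr {m : ℕ} (i : Fin (m+1)) (σ : ℝ) (z w : Euc m) :
    dist (egr i σ z) (egr i σ w) ≤
      dist (σ * Real.sqrt (1 - ‖z‖^2)) (σ * Real.sqrt (1 - ‖w‖^2)) + dist z w := by
  rw [EuclideanSpace.dist_eq]
  rw [Fin.sum_univ_succAbove (fun k => dist (egr i σ z k) (egr i σ w k) ^ 2) i]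
  have h1 : egr i σ z i = σ * Real.sqrt (1 - ‖z‖^2) := by unfold egr; rw [WithLp.ofLp_toLp]; exact Fin.insertNth_apply_same i _ _
  have h1' : egr i σ w i = σ * Real.sqrt (1 - ‖w‖^2) := by unfold egr; rw [WithLp.ofLp_toLp]; exact Fin.insertNth_apply_same i _ _
  have h2 : ∀ j, egr i σ z (i.succAbove j) = z j := fun j => by unfold egr; rw [WithLp.ofLp_toLp]; exact Fin.insertNth_apply_succAbove i _ _ j
  have h2' : ∀ j, egr i σ w (i.succAbove j) = w j := fun j => by unfold egr; rw [WithLp.ofLp_toLp]; exact Fin.insertNth_apply_succAbove i _ _ j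
  simp only [h1, h1', h2, h2']
  have hd : ∑ j : Fin m, dist (z j) (w j) ^ 2 = dist z w ^ 2 := by
    rw [EuclideanSpace.dist_eq, Real.sq_sqrt (by positivity)]
  rw [hd]
  set A := dist (σ * Real.sqrt (1 - ‖z‖^2)) (σ * Real.sqrt (1 - ‖w‖^2)) with hA
  have hA0 : 0 ≤ A := dist_nonneg
  have hd0 : (0:ℝ) ≤ dist z w := dist_nonneg
  calc Real.sqrt (A^2 + dist z w ^2) ≤ Real.sqrt ((A + dist z w)^2) := by
        apply Real.sqrt_le_sqrt; nlinarith
    _ = A + dist z w := Real.sqrt_sq (by positivity)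

lemma sqrt_diff_bound {m : ℕ} {a b d : ℝ} (ha : 1/(m+1:ℝ) ≤ a) (hb : 1/(m+1:ℝ) ≤ b)
    (hab : |a - b| ≤ 2*d) : |Real.sqrt a - Real.sqrt b| ≤ Real.sqrt (m+1) * d := by
  set sa := Real.sqrt a
  set sb := Real.sqrt b
  set sm := Real.sqrt (m+1:ℝ)
  have hm1 : (0:ℝ) < (m:ℝ)+1 := by positivity
  have hsm : 0 < sm := Real.sqrt_pos.mpr hm1
  have ha0 : 0 < a := lt_of_lt_of_le (by positivity) ha
  have hb0 : 0 < b := lt_of_lt_of_le (by positivity) hb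
  have hsa : sa^2 = a := Real.sq_sqrt ha0.le
  have hsb : sb^2 = b := Real.sq_sqrt hb0.le
  have hsa0 : 0 < sa := Real.sqrt_pos.mpr ha0
  have hsb0 : 0 < sb := Real.sqrt_pos.mpr hb0
  have hsam : 1 ≤ sa * sm := by
    have : Real.sqrt (1/(m+1:ℝ)) ≤ sa := Real.sqrt_le_sqrt ha
    have h2 : Real.sqrt (1/(m+1:ℝ)) * sm = 1 := by
      rw [← Real.sqrt_mul (by positivity)]
      rw [one_div, inv_mul_cancel₀ hm1.ne']
      exact Real.sqrt_one
    nlinarith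
  have hsbm : 1 ≤ sb * sm := by
    have : Real.sqrt (1/(m+1:ℝ)) ≤ sb := Real.sqrt_le_sqrt hb
    have h2 : Real.sqrt (1/(m+1:ℝ)) * sm = 1 := by
      rw [← Real.sqrt_mul (by positivity)]
      rw [one_div, inv_mul_cancel₀ hm1.ne']
      exact Real.sqrt_one
    nlinarith
  have hd0 : 0 ≤ d := by nlinarith [abs_nonneg (a-b)]
  rcases abs_cases (a - b) with ⟨h, _⟩ | ⟨h, _⟩ <;> rcases abs_cases (sa - sb) with ⟨h2, _⟩ | ⟨h2, _⟩ <;>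
    rw [h2] <;> nlinarith [sq_nonneg (sa - sb), sq_nonneg (sa + sb), mul_pos hsa0 hsb0]

def Dset (m : ℕ) : Set (Euc m) := {z | ‖z‖ ≤ 1 ∧ 1/(m+1:ℝ) ≤ 1 - ‖z‖^2}

lemma egr_lipOn {m : ℕ} (i : Fin (m+1)) (σ : ℝ) (hσ : σ = 1 ∨ σ = -1) :
    LipschitzOnWith (Real.toNNReal (Real.sqrt (m+1) + 1)) (egr i σ) (Dset m) := by
  apply LipschitzOnWith.of_dist_le_mul
  intro z hz w hw
  have hcoe : ((Real.toNNReal (Real.sqrt (m+1) + 1)) : ℝ) = Real.sqrt (m+1) + 1 :=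
    Real.coe_toNNReal _ (by positivity)
  rw [hcoe]
  refine le_trans (dist_egr i σ z w) ?_
  have hσ1 : |σ| = 1 := by rcases hσ with h|h <;> simp [h]
  have h1 : dist (σ * Real.sqrt (1 - ‖z‖^2)) (σ * Real.sqrt (1 - ‖w‖^2))
      = |Real.sqrt (1 - ‖z‖^2) - Real.sqrt (1 - ‖w‖^2)| := by
    rw [Real.dist_eq, ← mul_sub, abs_mul, hσ1, one_mul]
  rw [h1]
  have hab : |(1 - ‖z‖^2) - (1 - ‖w‖^2)| ≤ 2 * dist z w := by
    have h3 : |‖w‖ - ‖z‖| ≤ dist w z := abs_norm_sub_norm_le w z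
    have h4 : dist w z = dist z w := dist_comm w z
    have h5 : ‖w‖ ≤ 1 := hw.1
    have h6 : ‖z‖ ≤ 1 := hz.1
    have h7 : 0 ≤ ‖w‖ := norm_nonneg w
    have h8 : 0 ≤ ‖z‖ := norm_nonneg z
    rcases abs_cases ((1 - ‖z‖^2) - (1 - ‖w‖^2)) with ⟨h9,_⟩|⟨h9,_⟩ <;> rw [h9] <;>
      rcases abs_cases (‖w‖ - ‖z‖) with ⟨h10,_⟩|⟨h10,_⟩ <;> nlinarith
  have := sqrt_diff_bound (m := m) hz.2 hw.2 hab
  nlinarith [dist_nonneg (x := z) (y := w)]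

lemma sphere_subset_cover {m : ℕ} :
    sphere (0 : Euc (m+1)) 1 ⊆
      ⋃ i : Fin (m+1), (egr i 1 '' Dset m ∪ egr i (-1) '' Dset m) := by
  intro x hx
  have hsum : ∑ k : Fin (m+1), ‖x k‖^2 = 1 := by
    rw [mem_sphere_zero_iff_norm] at hx
    rw [EuclideanSpace.norm_eq] at hx
    have := Real.sqrt_eq_one.mp hx
    exact this
  obtain ⟨i, _, hi⟩ := Finset.exists_max_image Finset.univ (fun k => ‖x k‖^2) ⟨0, Finset.mem_univ _⟩
  have hcard : (1:ℝ) ≤ (m+1:ℝ) * ‖x i‖^2 := by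
    have h := Finset.sum_le_card_nsmul Finset.univ (fun k => ‖x k‖^2) (‖x i‖^2)
      (fun k _ => hi k (Finset.mem_univ k))
    rw [hsum] at h
    simpa [nsmul_eq_mul, Finset.card_univ] using h
  set z := eproj i x with hzdef
  have hznorm : ‖z‖^2 = 1 - ‖x i‖^2 := by
    have : ∑ j : Fin m, ‖z j‖^2 = ∑ j : Fin m, ‖x (i.succAbove j)‖^2 := rfl
    rw [EuclideanSpace.norm_eq, Real.sq_sqrt (by positivity), this]
    have h2 := Fin.sum_univ_succAbove (fun k => ‖x k‖^2) i
    rw [hsum] at h2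
    linarith
  have hm1 : (0:ℝ) < (m+1:ℝ) := by positivity
  have hzD : z ∈ Dset m := by
    constructor
    · rw [← Real.sqrt_one]
      rw [show ‖z‖ = Real.sqrt (‖z‖^2) from (Real.sqrt_sq (norm_nonneg z)).symm]
      apply Real.sqrt_le_sqrt; nlinarith [sq_nonneg (x i)]
    · rw [hznorm]; rw [div_le_iff₀ hm1]; nlinarith
  set σ := if 0 ≤ x i then (1:ℝ) else -1 with hσdef
  have hσ : σ = 1 ∨ σ = -1 := by unfold σ; split <;> simp
  have hxe : egr i σ z = x := by
    have hvi : σ * Real.sqrt (1 - ‖z‖^2) = x i := by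
      rw [hznorm]
      have : (1 : ℝ) - (1 - ‖x i‖^2) = ‖x i‖^2 := by ring
      rw [this]
      rw [show ‖x i‖^2 = (x i)^2 by rw [Real.norm_eq_abs, sq_abs]]
      rw [Real.sqrt_sq_eq_abs, hσdef]
      rcases le_or_gt 0 (x i) with hpos | hneg
      · rw [if_pos hpos, abs_of_nonneg hpos, one_mul]
      · rw [if_neg (not_le.mpr hneg), abs_of_neg hneg]; ring
    ext k
    by_cases hk : k = i
    · rw [hk, show egr i σ z i = σ * Real.sqrt (1 - ‖z‖^2) from by unfold egr; rw [WithLp.ofLp_toLp]; exact Fin.insertNth_apply_same i _ _]; exact hvi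
    · obtain ⟨j, rfl⟩ := Fin.exists_succAbove_eq hk
      unfold egr; rw [WithLp.ofLp_toLp]; exact Fin.insertNth_apply_succAbove i _ _ j
  apply Set.mem_iUnion.mpr ⟨i, ?_⟩
  rcases hσ with h|h
  · left; exact ⟨z, hzD, by rw [← h, hxe]⟩
  · right; exact ⟨z, hzD, by rw [← h, hxe]⟩

lemma sphere_hm_finite (m : ℕ) : μH[(m:ℝ)] (sphere (0 : Euc (m+1)) 1) < ⊤ := by
  refine lt_of_le_of_lt (measure_mono sphere_subset_cover) ?_
  refine lt_of_le_of_lt (measure_iUnion_le _) ?_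
  rw [tsum_fintype]
  apply ENNReal.sum_lt_top.mpr
  intro i _
  have hD : μH[(m:ℝ)] (Dset m) < ⊤ := by
    apply euc_bounded_finite
    exact (Metric.isBounded_closedBall (x := (0:Euc m)) (r := 1)).subset
      (fun z hz => by simpa [Metric.mem_closedBall] using hz.1)
  have himg : ∀ σ : ℝ, σ = 1 ∨ σ = -1 → μH[(m:ℝ)] (egr i σ '' Dset m) < ⊤ := by
    intro σ hσ
    refine lt_of_le_of_lt ((egr_lipOn i σ hσ).hausdorffMeasure_image_le (by positivity)) ?_
    exact ENNReal.mul_lt_top (ENNReal.rpow_lt_top_of_nonneg (by positivity) ENNReal.coe_ne_top) hD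
  refine lt_of_le_of_lt (measure_union_le _ _) ?_
  exact ENNReal.add_lt_top.mpr ⟨himg 1 (Or.inl rfl), himg (-1) (Or.inr rfl)⟩

lemma cap_hm_pos {m : ℕ} (u₀ : Euc (m+1)) (hu : u₀ ∈ sphere (0 : Euc (m+1)) 1)
    {ε : ℝ} (hε : 0 < ε) :
    0 < μH[(m:ℝ)] (ball u₀ ε ∩ sphere (0 : Euc (m+1)) 1) := by
  -- find a coordinate where u₀ is nonzero
  have hu1 : ‖u₀‖ = 1 := mem_sphere_zero_iff_norm.mp hu
  have hsum : ∑ k : Fin (m+1), ‖u₀ k‖^2 = 1 := by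
    rw [EuclideanSpace.norm_eq] at hu1
    exact Real.sqrt_eq_one.mp hu1
  have hex : ∃ i, u₀ i ≠ 0 := by
    by_contra h
    push_neg at h
    simp [h] at hsum
  obtain ⟨i, hi⟩ := hex
  set σ := if 0 ≤ u₀ i then (1:ℝ) else -1 with hσdef
  have hσ : σ = 1 ∨ σ = -1 := by rw [hσdef]; split <;> simp
  set z₀ := eproj i u₀ with hz₀def
  have hz₀norm : ‖z₀‖^2 = 1 - ‖u₀ i‖^2 := by
    have : ∑ j : Fin m, ‖z₀ j‖^2 = ∑ j : Fin m, ‖u₀ (i.succAbove j)‖^2 := rfl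
    rw [EuclideanSpace.norm_eq, Real.sq_sqrt (by positivity), this]
    have h2 := Fin.sum_univ_succAbove (fun k => ‖u₀ k‖^2) i
    rw [hsum] at h2
    linarith
  have hz₀lt : ‖z₀‖ < 1 := by
    have h1 : ‖u₀ i‖^2 > 0 := pow_pos (norm_pos_iff.mpr hi) 2
    nlinarith [norm_nonneg z₀]
  -- graph map is continuous
  have hgc : Continuous (egr i σ) := by
    unfold egr
    have h1 : Continuous (fun z : Euc m => σ * Real.sqrt (1 - ‖z‖^2)) := by fun_prop
    exact (PiLp.continuous_toLp 2 _).comp (h1.finInsertNth i (PiLp.continuous_ofLp 2 _))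
  have hgz₀ : egr i σ z₀ = u₀ := by
    have hvi : σ * Real.sqrt (1 - ‖z₀‖^2) = u₀ i := by
      rw [hz₀norm]
      rw [show (1 : ℝ) - (1 - ‖u₀ i‖^2) = ‖u₀ i‖^2 by ring]
      rw [show ‖u₀ i‖^2 = (u₀ i)^2 by rw [Real.norm_eq_abs, sq_abs]]
      rw [Real.sqrt_sq_eq_abs, hσdef]
      rcases le_or_gt 0 (u₀ i) with hpos | hneg
      · rw [if_pos hpos, abs_of_nonneg hpos, one_mul]
      · rw [if_neg (not_le.mpr hneg), abs_of_neg hneg]; ring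
    ext k
    by_cases hk : k = i
    · rw [hk, show egr i σ z₀ i = σ * Real.sqrt (1 - ‖z₀‖^2) from by unfold egr; rw [WithLp.ofLp_toLp]; exact Fin.insertNth_apply_same i _ _]
      exact hvi
    · obtain ⟨j, rfl⟩ := Fin.exists_succAbove_eq hk
      unfold egr; rw [WithLp.ofLp_toLp]; exact Fin.insertNth_apply_succAbove i _ _ j
  obtain ⟨δ₁, hδ₁, hδ₁p⟩ := Metric.continuous_iff.mp hgc z₀ ε hε
  set δ := min δ₁ (1 - ‖z₀‖) with hδdef
  have hδpos : 0 < δ := lt_min hδ₁ (by linarith)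
  have hsub : ball z₀ δ ⊆ eproj i '' (ball u₀ ε ∩ sphere (0 : Euc (m+1)) 1) := by
    intro z hz
    rw [mem_ball] at hz
    have hz1 : dist z z₀ < δ₁ := lt_of_lt_of_le hz (min_le_left _ _)
    have hz2 : ‖z‖ ≤ 1 := by
      have h3 : ‖z‖ - ‖z₀‖ ≤ dist z z₀ := by
        have := abs_norm_sub_norm_le z z₀
        rw [← dist_eq_norm] at this
        exact (abs_le.mp this).2
      have h4 : dist z z₀ < 1 - ‖z₀‖ := lt_of_lt_of_le hz (min_le_right _ _)
      linarith
    refine ⟨egr i σ z, ⟨?_, egr_norm i σ hσ z hz2⟩, ?_⟩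
    · rw [mem_ball, ← hgz₀]
      exact hδ₁p z hz1
    · ext j
      show egr i σ z (i.succAbove j) = z j
      unfold egr; rw [WithLp.ofLp_toLp]; exact Fin.insertNth_apply_succAbove i _ _ j
  have h1 : μH[(m:ℝ)] (eproj i '' (ball u₀ ε ∩ sphere (0 : Euc (m+1)) 1))
      ≤ 1 ^ (m:ℝ) * μH[(m:ℝ)] (ball u₀ ε ∩ sphere (0 : Euc (m+1)) 1) :=
    (eproj_lip i).hausdorffMeasure_image_le (by positivity) _
  rw [ENNReal.one_rpow, one_mul] at h1
  exact lt_of_lt_of_le (lt_of_lt_of_le (euc_ball_pos z₀ hδpos) (measure_mono hsub)) h1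

lemma usphere_eq (n : ℕ) : usphere n = sphere (0 : Euc n) 1 := rfl

lemma measurable_usphere (n : ℕ) : MeasurableSet (usphere n) :=
  (isClosed_sphere).measurableSet

lemma smeas_univ_eq (n : ℕ) : smeas n univ = μH[(n:ℝ)-1] (usphere n) := by
  rw [smeas, Measure.restrict_apply MeasurableSet.univ, univ_inter]

lemma smeas_finite {n : ℕ} (hn : 1 ≤ n) : smeas n univ < ⊤ := by
  obtain ⟨m, rfl⟩ : ∃ m, n = m + 1 := ⟨n - 1, by omega⟩
  rw [smeas_univ_eq, show ((m+1 : ℕ) : ℝ) - 1 = (m : ℝ) by push_cast; ring, usphere_eq]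
  exact sphere_hm_finite m

lemma smeas_ball_pos {n : ℕ} (hn : 1 ≤ n) {u₀ : Euc n} (hu : u₀ ∈ usphere n) {ε : ℝ}
    (hε : 0 < ε) : 0 < smeas n (ball u₀ ε) := by
  obtain ⟨m, rfl⟩ : ∃ m, n = m + 1 := ⟨n - 1, by omega⟩
  rw [smeas, Measure.restrict_apply measurableSet_ball,
    show ((m+1 : ℕ) : ℝ) - 1 = (m : ℝ) by push_cast; ring, usphere_eq]
  exact cap_hm_pos u₀ hu hε

lemma integrable_contOn {n : ℕ} (hn : 1 ≤ n) {f : Euc n → ℝ}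
    (hf : ContinuousOn f (usphere n)) : Integrable f (smeas n) := by
  haveI : IsFiniteMeasure (smeas n) := ⟨smeas_finite hn⟩
  obtain ⟨C, hC⟩ := (isCompact_sphere (0:Euc n) 1).exists_bound_of_continuousOn
    (by rw [← usphere_eq]; exact hf)
  refine ⟨hf.aestronglyMeasurable (measurable_usphere n), ?_⟩
  apply HasFiniteIntegral.of_bounded (C := C)
  exact (ae_restrict_mem (measurable_usphere n)).mono fun x hx => hC x hx

lemma ae_smeas_of_forall {n : ℕ} {p : Euc n → Prop} (h : ∀ u ∈ usphere n, p u) :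
    ∀ᵐ u ∂smeas n, p u :=
  (ae_restrict_mem (measurable_usphere n)).mono fun x hx => h x hx

lemma integral_contOn_pos {n : ℕ} (hn : 1 ≤ n) {f : Euc n → ℝ}
    (hf : ContinuousOn f (usphere n)) (hpos : ∀ u ∈ usphere n, 0 < f u) :
    0 < ∫ u, f u ∂smeas n := by
  haveI : IsFiniteMeasure (smeas n) := ⟨smeas_finite hn⟩
  have hSne : (usphere n).Nonempty := by
    refine ⟨EuclideanSpace.single ⟨0, by omega⟩ 1, ?_⟩
    rw [usphere_eq, mem_sphere_zero_iff_norm, EuclideanSpace.norm_single]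
    norm_num
  obtain ⟨x₀, hx₀S, hx₀⟩ := (isCompact_sphere (0:Euc n) 1).exists_isMinOn
    (by rwa [← usphere_eq]) (by rw [← usphere_eq]; exact hf)
  set c := f x₀ with hc
  have hcpos : 0 < c := hpos x₀ hx₀S
  have hμpos : 0 < (smeas n univ).toReal := by
    refine ENNReal.toReal_pos ?_ (smeas_finite hn).ne
    intro h0
    have h1 := smeas_ball_pos hn hSne.some_mem (ε := 1) one_pos
    have h2 : smeas n (ball hSne.some 1) ≤ smeas n univ := measure_mono (subset_univ _)
    rw [h0] at h2
    exact absurd (le_antisymm h2 zero_le') h1.ne'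
  calc (0:ℝ) < (smeas n univ).toReal * c := by positivity
    _ = ∫ _, c ∂smeas n := by rw [integral_const, smul_eq_mul]; rfl
    _ ≤ ∫ u, f u ∂smeas n := by
        apply integral_mono_ae (integrable_const c) (integrable_contOn hn hf)
        exact ae_smeas_of_forall fun u hu => hx₀ hu

lemma jensen_aux {n : ℕ} (hn : 2 ≤ n) {q : ℝ} (hq : q ≠ 0) {φ : ℝ → ℝ}
    (hφc : ContinuousOn φ (Ioi 0)) (hφpos : ∀ t > (0:ℝ), 0 < φ t)
    (hconv : StrictConvexOn ℝ (Ioi 0) (fun t : ℝ => φ (t ^ (1/q))))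
    {ρA ρB ρQ : Euc n → ℝ}
    (hρA : ContinuousOn ρA (usphere n)) (hρApos : ∀ u ∈ usphere n, 0 < ρA u)
    (hρB : ContinuousOn ρB (usphere n)) (hρBpos : ∀ u ∈ usphere n, 0 < ρB u)
    (hρQ : ContinuousOn ρQ (usphere n)) (hρQpos : ∀ u ∈ usphere n, 0 < ρQ u)
    (hI : ∫ u, φ (ρA u / ρB u) * ρB u ^ q * ρQ u ^ ((n:ℝ) - q) ∂smeas n
        = φ 1 * ∫ u, ρA u ^ q * ρQ u ^ ((n:ℝ) - q) ∂smeas n) :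
    (φ ((((∫ u, ρA u ^ q * ρQ u ^ ((n:ℝ)-q) ∂smeas n) /
          (∫ u, ρB u ^ q * ρQ u ^ ((n:ℝ)-q) ∂smeas n))) ^ (1/q))
        ≤ φ 1 * ((∫ u, ρA u ^ q * ρQ u ^ ((n:ℝ)-q) ∂smeas n) /
          (∫ u, ρB u ^ q * ρQ u ^ ((n:ℝ)-q) ∂smeas n)))
    ∧ ((∫ u, ρA u ^ q * ρQ u ^ ((n:ℝ)-q) ∂smeas n)
        = (∫ u, ρB u ^ q * ρQ u ^ ((n:ℝ)-q) ∂smeas n)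
        → ∀ u ∈ usphere n, ρA u = ρB u) := by
  have hn1 : 1 ≤ n := by omega
  haveI : IsFiniteMeasure (smeas n) := ⟨smeas_finite hn1⟩
  set S := usphere n with hSdef
  have hSmeas : MeasurableSet S := measurable_usphere n
  set wA := fun u => ρA u ^ q * ρQ u ^ ((n:ℝ)-q) with hwAdef
  set wB := fun u => ρB u ^ q * ρQ u ^ ((n:ℝ)-q) with hwBdef
  have hwAc : ContinuousOn wA S :=
    (hρA.rpow_const fun u hu => Or.inl (hρApos u hu).ne').mul
      (hρQ.rpow_const fun u hu => Or.inl (hρQpos u hu).ne')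
  have hwBc : ContinuousOn wB S :=
    (hρB.rpow_const fun u hu => Or.inl (hρBpos u hu).ne').mul
      (hρQ.rpow_const fun u hu => Or.inl (hρQpos u hu).ne')
  have hwApos : ∀ u ∈ S, 0 < wA u := fun u hu =>
    mul_pos (Real.rpow_pos_of_pos (hρApos u hu) q) (Real.rpow_pos_of_pos (hρQpos u hu) _)
  have hwBpos : ∀ u ∈ S, 0 < wB u := fun u hu =>
    mul_pos (Real.rpow_pos_of_pos (hρBpos u hu) q) (Real.rpow_pos_of_pos (hρQpos u hu) _)
  set IA := ∫ u, wA u ∂smeas n with hIAdef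
  set IB := ∫ u, wB u ∂smeas n with hIBdef
  have hIA : 0 < IA := integral_contOn_pos hn1 hwAc hwApos
  have hIB : 0 < IB := integral_contOn_pos hn1 hwBc hwBpos
  set d := fun u => ((Real.toNNReal (wB u) : ℝ≥0) : ℝ≥0∞) with hddef
  set ν := (smeas n).withDensity d with hνdef
  have hdmeas : AEMeasurable (fun u => Real.toNNReal (wB u)) (smeas n) :=
    (hwBc.aemeasurable hSmeas).real_toNNReal
  have hν_univ : ν univ = ENNReal.ofReal IB := by
    rw [hνdef, withDensity_apply _ MeasurableSet.univ, Measure.restrict_univ,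
      ofReal_integral_eq_lintegral_ofReal (integrable_contOn hn1 hwBc)
        (ae_smeas_of_forall fun u hu => (hwBpos u hu).le)]
    rfl
  haveI : IsFiniteMeasure ν := ⟨by rw [hν_univ]; exact ENNReal.ofReal_lt_top⟩
  haveI : NeZero ν := ⟨fun h0 => by
    have := hν_univ
    rw [h0] at this
    simp only [Measure.coe_zero, Pi.zero_apply] at this
    exact absurd this.symm (ne_of_gt (ENNReal.ofReal_pos.mpr hIB))⟩
  set f := fun u => (ρA u / ρB u) ^ q with hfdef
  set g := fun t : ℝ => φ (t ^ (1/q)) with hgdef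
  have hdivc : ContinuousOn (fun u => ρA u / ρB u) S :=
    hρA.div hρB fun u hu => (hρBpos u hu).ne'
  have hdivpos : ∀ u ∈ S, 0 < ρA u / ρB u := fun u hu =>
    div_pos (hρApos u hu) (hρBpos u hu)
  have hfc : ContinuousOn f S :=
    hdivc.rpow_const fun u hu => Or.inl (hdivpos u hu).ne'
  have hfpos : ∀ u ∈ S, 0 < f u := fun u hu => Real.rpow_pos_of_pos (hdivpos u hu) q
  have hgf_pt : ∀ u ∈ S, g (f u) = φ (ρA u / ρB u) := by
    intro u hu
    show φ (((ρA u / ρB u) ^ q) ^ (1/q)) = φ (ρA u / ρB u)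
    rw [← Real.rpow_mul (hdivpos u hu).le, mul_one_div_cancel hq, Real.rpow_one]
  have hgfc : ContinuousOn (fun u => φ (ρA u / ρB u)) S :=
    hφc.comp hdivc fun u hu => mem_Ioi.mpr (hdivpos u hu)
  -- pointwise identities for densities
  have hsmulf : ∀ u ∈ S, (Real.toNNReal (wB u) : ℝ) * f u = wA u := by
    intro u hu
    rw [Real.coe_toNNReal _ (hwBpos u hu).le, hfdef]
    show wB u * (ρA u / ρB u) ^ q = wA u
    rw [Real.div_rpow (hρApos u hu).le (hρBpos u hu).le, hwBdef, hwAdef]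
    have hBq : ρB u ^ q ≠ 0 := (Real.rpow_pos_of_pos (hρBpos u hu) q).ne'
    field_simp
  have hint_f : ∫ u, f u ∂ν = IA := by
    rw [hνdef, integral_withDensity_eq_integral_smul₀ hdmeas f]
    exact integral_congr_ae (ae_smeas_of_forall fun u hu => by
      simp only [NNReal.smul_def, smul_eq_mul]; exact hsmulf u hu)
  
  have hsmulgf : ∀ᵐ u ∂smeas n, Real.toNNReal (wB u) • g (f u)
      = φ (ρA u / ρB u) * ρB u ^ q * ρQ u ^ ((n:ℝ)-q) := by
    refine ae_smeas_of_forall fun u hu => ?_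
    simp only [NNReal.smul_def, smul_eq_mul]
    rw [Real.coe_toNNReal _ (hwBpos u hu).le, hgf_pt u hu, hwBdef]
    ring
  have hint_gf : ∫ u, g (f u) ∂ν = φ 1 * IA := by
    rw [hνdef, integral_withDensity_eq_integral_smul₀ hdmeas (fun u => g (f u))]
    rw [integral_congr_ae hsmulgf]
    exact hI
  have hint_f_int : Integrable f ν := by
    rw [hνdef, integrable_withDensity_iff_integrable_smul₀ hdmeas]
    refine (integrable_contOn hn1 hwAc).congr ?_
    exact ae_smeas_of_forall fun u hu => by
      simp only [NNReal.smul_def, smul_eq_mul]; exact (hsmulf u hu).symm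
  have hint_gf_int : Integrable (g ∘ f) ν := by
    rw [hνdef, integrable_withDensity_iff_integrable_smul₀ hdmeas]
    refine (integrable_contOn hn1
      (f := fun u => φ (ρA u / ρB u) * ρB u ^ q * ρQ u ^ ((n:ℝ)-q)) ((hgfc.mul
      (hρB.rpow_const fun u hu => Or.inl (hρBpos u hu).ne')).mul
      (hρQ.rpow_const fun u hu => Or.inl (hρQpos u hu).ne'))).congr ?_
    exact hsmulgf.mono fun u hu => hu.symm
  -- average of f
  have havg : ⨍ u, f u ∂ν = IA / IB := by
    rw [average_eq, hint_f, measureReal_def, hν_univ, ENNReal.toReal_ofReal hIB.le, smul_eq_mul,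
      inv_mul_eq_div]
  have havg_gf : ⨍ u, g (f u) ∂ν = φ 1 * (IA / IB) := by
    rw [average_eq, hint_gf, measureReal_def, hν_univ, ENNReal.toReal_ofReal hIB.le, smul_eq_mul]
    field_simp
  -- bounds
  have hSco : IsCompact S := isCompact_sphere 0 1
  have hSne : S.Nonempty := by
    refine ⟨EuclideanSpace.single ⟨0, by omega⟩ 1, ?_⟩
    rw [hSdef, usphere_eq, mem_sphere_zero_iff_norm, EuclideanSpace.norm_single]
    norm_num
  obtain ⟨xa, hxaS, hxa⟩ := hSco.exists_isMinOn hSne hfc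
  obtain ⟨xb, hxbS, hxb⟩ := hSco.exists_isMaxOn hSne hfc
  set a := f xa with hadef
  set b := f xb with hbdef
  have ha0 : 0 < a := hfpos xa hxaS
  have hfmem : ∀ u ∈ S, f u ∈ Icc a b := fun u hu => ⟨hxa hu, hxb hu⟩
  have hIcc : Icc a b ⊆ Ioi 0 := fun t ht => lt_of_lt_of_le ha0 ht.1
  have hfs : ∀ᵐ x ∂ν, f x ∈ Icc a b :=
    (ae_smeas_of_forall hfmem).filter_mono (withDensity_absolutelyContinuous (smeas n) d).ae_le
  have hgcIcc : ContinuousOn g (Icc a b) := by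
    refine hφc.comp (continuousOn_id.rpow_const fun t ht => Or.inl (hIcc ht).ne') ?_
    exact fun t ht => mem_Ioi.mpr (Real.rpow_pos_of_pos (hIcc ht) _)
  have hgconv : ConvexOn ℝ (Icc a b) g := hconv.convexOn.subset hIcc (convex_Icc a b)
  have hgsconv : StrictConvexOn ℝ (Icc a b) g := hconv.subset hIcc (convex_Icc a b)
  constructor
  · have hjen := hgconv.map_average_le hgcIcc isClosed_Icc hfs hint_f_int hint_gf_int
    rw [havg] at hjen
    have : ⨍ x, g (f x) ∂ν = φ 1 * (IA / IB) := havg_gf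
    rw [this] at hjen
    exact hjen
  · intro hAB u₀ hu₀
    have hone : IA / IB = 1 := by rw [hAB, div_self hIB.ne']
    rcases hgsconv.ae_eq_const_or_map_average_lt hgcIcc isClosed_Icc hfs hint_f_int
      hint_gf_int with hae | hlt
    · -- f is a.e. constant equal to 1
      rw [havg, hone] at hae
      by_contra hne
      have hfne : f u₀ ≠ 1 := by
        intro h1
        apply hne
        have hx := hdivpos u₀ hu₀
        have hlog := congrArg Real.log h1
        rw [hfdef] at hlog
        simp only at hlog
        rw [Real.log_rpow hx, Real.log_one] at hlog
        have hl0 : Real.log (ρA u₀ / ρB u₀) = 0 := by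
          rcases mul_eq_zero.mp hlog with h | h
          · exact absurd h hq
          · exact h
        have := Real.log_eq_zero.mp hl0
        rcases this with h | h | h
        · exact absurd h hx.ne'
        · exact (div_eq_one_iff_eq (hρBpos u₀ hu₀).ne').mp h
        · linarith
      have hcw : ContinuousWithinAt f S u₀ := hfc u₀ hu₀
      have hev : ∀ᶠ x in 𝓝[S] u₀, f x ≠ 1 := hcw.eventually_ne hfne
      obtain ⟨ε, hε, hball⟩ := Metric.mem_nhdsWithin_iff.mp hev
      set A := ball u₀ ε ∩ S with hAdef
      have hAmeas : MeasurableSet A := measurableSet_ball.inter hSmeas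
      have hν0 : ν A = 0 := by
        refine measure_mono_null ?_ (ae_iff.mp hae)
        intro x hx
        exact hball hx
      have hνpos : 0 < ν A := by
        obtain ⟨xc, hxcS, hxc⟩ := hSco.exists_isMinOn hSne hwBc
        have hcpos : 0 < wB xc := hwBpos xc hxcS
        have h1 : ν A = ∫⁻ x in A, d x ∂smeas n := by
          rw [hνdef, withDensity_apply _ hAmeas]
        have h2 : ENNReal.ofReal (wB xc) * smeas n A ≤ ∫⁻ x in A, d x ∂smeas n := by
          rw [← setLIntegral_const A (ENNReal.ofReal (wB xc))]
          refine setLIntegral_mono' hAmeas fun x hx => ?_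
          exact ENNReal.ofReal_le_ofReal (hxc hx.2)
        have h3 : 0 < smeas n A := by
          have hb := smeas_ball_pos hn1 hu₀ hε
          have : smeas n A = smeas n (ball u₀ ε) := by
            rw [smeas, Measure.restrict_apply hAmeas,
              Measure.restrict_apply measurableSet_ball, hAdef, hSdef, inter_assoc, inter_self]
          rw [this]
          exact hb
        calc (0:ℝ≥0∞) < ENNReal.ofReal (wB xc) * smeas n A :=
              ENNReal.mul_pos (ENNReal.ofReal_pos.mpr hcpos).ne' h3.ne'
          _ ≤ ∫⁻ x in A, d x ∂smeas n := h2
          _ = ν A := h1.symm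
      exact absurd hν0 hνpos.ne'
    · rw [havg, havg_gf, hone, mul_one] at hlt
      have : g 1 = φ 1 := by rw [hgdef]; simp [Real.one_rpow]
      rw [← this] at hlt
      exact absurd hlt (lt_irrefl _)


theorem stmt8 (n : ℕ) (hn : 2 ≤ n) (q : ℝ) (hq : q ≠ 0) (φ : ℝ → ℝ)
    (hφc : ContinuousOn φ (Ioi 0)) (hφpos : ∀ t > (0:ℝ), 0 < φ t)
    (hconv : StrictConvexOn ℝ (Ioi 0) (fun t : ℝ => φ (t ^ (1/q))))
    (ρK ρL ρQ : Euc n → ℝ)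
    (hρK : ContinuousOn ρK (usphere n)) (hρKpos : ∀ u ∈ usphere n, 0 < ρK u)
    (hρL : ContinuousOn ρL (usphere n)) (hρLpos : ∀ u ∈ usphere n, 0 < ρL u)
    (hρQ : ContinuousOn ρQ (usphere n)) (hρQpos : ∀ u ∈ usphere n, 0 < ρQ u)
    (heq : ∀ ρM : Euc n → ℝ, ContinuousOn ρM (usphere n) →
      (∀ u ∈ usphere n, 0 < ρM u) →
      Vqφ n q φ ρK ρM ρQ = Vqφ n q φ ρL ρM ρQ) :
    ∀ u ∈ usphere n, ρK u = ρL u := by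
  have hn1 : 1 ≤ n := by omega
  have hinv : (1/(n:ℝ)) ≠ 0 := one_div_ne_zero (Nat.cast_ne_zero.mpr (by omega))
  have hJ : ∀ ρM : Euc n → ℝ, ContinuousOn ρM (usphere n) →
      (∀ u ∈ usphere n, 0 < ρM u) →
      ∫ u, φ (ρM u / ρK u) * ρK u ^ q * ρQ u ^ ((n:ℝ) - q) ∂smeas n
        = ∫ u, φ (ρM u / ρL u) * ρL u ^ q * ρQ u ^ ((n:ℝ) - q) ∂smeas n :=
    fun ρM hM hMpos => mul_left_cancel₀ hinv (heq ρM hM hMpos)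
  set IK := ∫ u, ρK u ^ q * ρQ u ^ ((n:ℝ) - q) ∂smeas n with hIKdef
  set IL := ∫ u, ρL u ^ q * ρQ u ^ ((n:ℝ) - q) ∂smeas n with hILdef
  have hEK : ∫ u, φ (ρK u / ρK u) * ρK u ^ q * ρQ u ^ ((n:ℝ) - q) ∂smeas n = φ 1 * IK := by
    rw [hIKdef, ← MeasureTheory.integral_const_mul]
    refine integral_congr_ae (ae_smeas_of_forall fun u hu => ?_)
    show φ (ρK u / ρK u) * ρK u ^ q * ρQ u ^ ((n:ℝ) - q)
      = φ 1 * (ρK u ^ q * ρQ u ^ ((n:ℝ) - q))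
    rw [div_self (hρKpos u hu).ne']
    ring
  have hEL : ∫ u, φ (ρL u / ρL u) * ρL u ^ q * ρQ u ^ ((n:ℝ) - q) ∂smeas n = φ 1 * IL := by
    rw [hILdef, ← MeasureTheory.integral_const_mul]
    refine integral_congr_ae (ae_smeas_of_forall fun u hu => ?_)
    show φ (ρL u / ρL u) * ρL u ^ q * ρQ u ^ ((n:ℝ) - q)
      = φ 1 * (ρL u ^ q * ρQ u ^ ((n:ℝ) - q))
    rw [div_self (hρLpos u hu).ne']
    ring
  have hKL : ∫ u, φ (ρK u / ρL u) * ρL u ^ q * ρQ u ^ ((n:ℝ) - q) ∂smeas n = φ 1 * IK :=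
    (hJ ρK hρK hρKpos).symm.trans hEK
  have hLK : ∫ u, φ (ρL u / ρK u) * ρK u ^ q * ρQ u ^ ((n:ℝ) - q) ∂smeas n = φ 1 * IL :=
    (hJ ρL hρL hρLpos).trans hEL
  obtain ⟨hineq1, heqcase⟩ := jensen_aux hn hq hφc hφpos hconv
    hρK hρKpos hρL hρLpos hρQ hρQpos hKL
  obtain ⟨hineq2, -⟩ := jensen_aux hn hq hφc hφpos hconv
    hρL hρLpos hρK hρKpos hρQ hρQpos hLK
  -- positivity of the two integrals
  have hwKc : ContinuousOn (fun u => ρK u ^ q * ρQ u ^ ((n:ℝ)-q)) (usphere n) :=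
    (hρK.rpow_const fun u hu => Or.inl (hρKpos u hu).ne').mul
      (hρQ.rpow_const fun u hu => Or.inl (hρQpos u hu).ne')
  have hwLc : ContinuousOn (fun u => ρL u ^ q * ρQ u ^ ((n:ℝ)-q)) (usphere n) :=
    (hρL.rpow_const fun u hu => Or.inl (hρLpos u hu).ne').mul
      (hρQ.rpow_const fun u hu => Or.inl (hρQpos u hu).ne')
  have hIK : 0 < IK := integral_contOn_pos hn1 hwKc fun u hu =>
    mul_pos (Real.rpow_pos_of_pos (hρKpos u hu) q) (Real.rpow_pos_of_pos (hρQpos u hu) _)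
  have hIL : 0 < IL := integral_contOn_pos hn1 hwLc fun u hu =>
    mul_pos (Real.rpow_pos_of_pos (hρLpos u hu) q) (Real.rpow_pos_of_pos (hρQpos u hu) _)
  -- show IK = IL using strict convexity
  have hIKIL : IK = IL := by
    by_contra hne
    set β := IK / IL with hβdef
    have hβpos : 0 < β := div_pos hIK hIL
    have hβne : β ≠ 1 := fun h => hne ((div_eq_one_iff_eq hIL.ne').mp h)
    have hβinv : IL / IK = β⁻¹ := by rw [hβdef, inv_div]
    rw [hβinv] at hineq2
    have hφ1 : 0 < φ 1 := hφpos 1 one_pos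
    set g := fun t : ℝ => φ (t ^ (1/q)) with hgdef
    have hβββ : β ≠ β⁻¹ := by
      intro h
      have h2 : β * β = 1 := by
        calc β * β = β * β⁻¹ := by rw [← h]
          _ = 1 := mul_inv_cancel₀ hβpos.ne'
      rcases mul_self_eq_one_iff.mp h2 with h3 | h3
      · exact hβne h3
      · rw [h3] at hβpos; linarith
    have ha : (0:ℝ) < 1/(β+1) := by positivity
    have hb : (0:ℝ) < β/(β+1) := by positivity
    have hab : 1/(β+1) + β/(β+1) = 1 := by field_simp; ring
    have hpt : (1/(β+1)) • β + (β/(β+1)) • β⁻¹ = 1 := by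
      simp only [smul_eq_mul]
      field_simp
    have hstrict := hconv.2 (mem_Ioi.mpr hβpos) (mem_Ioi.mpr (inv_pos.mpr hβpos)) hβββ ha hb hab
    rw [hpt] at hstrict
    simp only [hgdef, smul_eq_mul, Real.one_rpow] at hstrict
    have h1 : (1/(β+1)) * φ (β ^ (1/q)) ≤ (1/(β+1)) * (φ 1 * β) :=
      mul_le_mul_of_nonneg_left hineq1 ha.le
    have h2 : (β/(β+1)) * φ ((β⁻¹) ^ (1/q)) ≤ (β/(β+1)) * (φ 1 * β⁻¹) :=
      mul_le_mul_of_nonneg_left hineq2 hb.le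
    have hsum : (1/(β+1)) * (φ 1 * β) + (β/(β+1)) * (φ 1 * β⁻¹) = φ 1 := by
      field_simp
    linarith
  exact heqcase hIKIL
end
end

section
/- Let m, n ≥ 2, q > 0, let φ:[0,∞)^m→[0,∞) be continuous, strictly increasing in each component with φ(0)=0, φ(e_j)=1 and lim_{t→∞}φ(tx)=∞ for x≠0, and suppose φ_q(x) := φ(x_1^{1/q},…,x_m^{1/q}) is convex. Let G:(0,∞)×S^{n-1}→(0,∞) be continuous and suppose t ↦ G(t,u)/t^q is increasing for every u ∈ S^{n-1}. Let K_1,…,K_m be star bodies with strictly positive continuous radial functions, and let K = +̃_φ(K_1,…,K_m) be their radial Orlicz sum, defined pointwise by φ(ρ_{K_1}(u)/ρ_K(u),…,ρ_{K_m}(u)/ρ_K(u)) = 1. Then 1 ≥ φ( (Ṽ_G(K_1)/Ṽ_G(K))^{1/q}, …, (Ṽ_G(K_m)/Ṽ_G(K))^{1/q} ), where Ṽ_G(M) = ∫_{S^{n-1}} G(ρ_M(u),u) du. -/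
open MeasureTheory Metric Set Filter
open scoped RealInnerProductSpace NNReal ENNReal Topology

noncomputable section

/-- Monotonicity of `φ` under componentwise `≤` on the nonnegative orthant. -/
lemma phi_le_of_le {m : ℕ} {φ : (Fin m → ℝ) → ℝ}
    (hφmono : ∀ x : Fin m → ℝ, (∀ j, 0 ≤ x j) → ∀ j, ∀ t : ℝ, x j < t →
      φ x < φ (Function.update x j t))
    {x y : Fin m → ℝ} (hx : ∀ j, 0 ≤ x j) (hxy : ∀ j, x j ≤ y j) : φ x ≤ φ y := by
  suffices H : ∀ S : Finset (Fin m), ∀ x : Fin m → ℝ, (∀ j, 0 ≤ x j) → (∀ j, x j ≤ y j) →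
      (∀ j ∉ S, x j = y j) → φ x ≤ φ y by
    exact H Finset.univ x hx hxy (fun j hj => absurd (Finset.mem_univ j) hj)
  intro S
  induction S using Finset.induction_on with
  | empty =>
      intro x hx hxy hout
      have : x = y := funext fun j => hout j (by simp)
      rw [this]
  | @insert a S ha IH =>
      intro x hx hxy hout
      set x' := Function.update x a (y a) with hx'def
      have hx' : ∀ j, 0 ≤ x' j := by
        intro j
        rw [hx'def, Function.update_apply]
        split
        · exact (hx a).trans (hxy a)
        · exact hx j
      have hxy' : ∀ j, x' j ≤ y j := by
        intro j
        rw [hx'def, Function.update_apply]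
        split
        · next h => rw [h]
        · exact hxy j
      have hout' : ∀ j ∉ S, x' j = y j := by
        intro j hj
        rw [hx'def, Function.update_apply]
        split
        · next h => rw [h]
        · next h => exact hout j (by simp [h, hj])
      have h1 : φ x ≤ φ x' := by
        rcases eq_or_lt_of_le (hxy a) with h | h
        · rw [hx'def, ← h, Function.update_eq_self]
        · exact (hφmono x hx a (y a) h).le
      exact h1.trans (IH x' hx' hxy' hout')

/-- Strict monotonicity of `φ`. -/
lemma phi_lt_of_lt {m : ℕ} {φ : (Fin m → ℝ) → ℝ}
    (hφmono : ∀ x : Fin m → ℝ, (∀ j, 0 ≤ x j) → ∀ j, ∀ t : ℝ, x j < t →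
      φ x < φ (Function.update x j t))
    {x y : Fin m → ℝ} (hx : ∀ j, 0 ≤ x j) (hxy : ∀ j, x j ≤ y j)
    (k : Fin m) (hk : x k < y k) : φ x < φ y := by
  refine lt_of_lt_of_le (hφmono x hx k (y k) hk) ?_
  refine phi_le_of_le hφmono ?_ ?_
  · intro j
    rw [Function.update_apply]
    split
    · exact (hx k).trans (hk.le)
    · exact hx j
  · intro j
    rw [Function.update_apply]
    split
    · next h => rw [h]
    · exact hxy j

/-- A convex function on the open orthant that is continuous on the closed orthant is
convex on the closed orthant. -/
lemma convexOn_nonneg_of_pos {m : ℕ} {f : (Fin m → ℝ) → ℝ}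
    (hc : ContinuousOn f {x : Fin m → ℝ | ∀ j, 0 ≤ x j})
    (hf : ConvexOn ℝ {x : Fin m → ℝ | ∀ j, 0 < x j} f) :
    ConvexOn ℝ {x : Fin m → ℝ | ∀ j, 0 ≤ x j} f := by
  have hT : ∀ w : Fin m → ℝ, (∀ j, 0 ≤ w j) →
      Tendsto (fun ε : ℝ => f (w + ε • 1)) (𝓝[>] (0:ℝ)) (𝓝 (f w)) := by
    intro w hw
    have hcw : ContinuousWithinAt f {x : Fin m → ℝ | ∀ j, 0 ≤ x j} w := hc w hw
    have hpath : Tendsto (fun ε : ℝ => w + ε • (1 : Fin m → ℝ)) (𝓝[>] (0:ℝ))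
        (𝓝[{x : Fin m → ℝ | ∀ j, 0 ≤ x j}] w) := by
      rw [tendsto_nhdsWithin_iff]
      constructor
      · have hcont : Continuous (fun ε : ℝ => w + ε • (1 : Fin m → ℝ)) := by continuity
        have := hcont.tendsto 0
        simp only [zero_smul, add_zero] at this
        exact this.mono_left nhdsWithin_le_nhds
      · filter_upwards [self_mem_nhdsWithin] with ε (hε : 0 < ε)
        intro j
        simp only [Pi.add_apply, Pi.smul_apply, Pi.one_apply, smul_eq_mul, mul_one]
        exact add_nonneg (hw j) hε.le
    exact hcw.tendsto.comp hpath
  constructor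
  · intro x hx y hy a b ha hb hab
    intro j
    have := add_nonneg (mul_nonneg ha (hx j)) (mul_nonneg hb (hy j))
    simpa using this
  intro x hx y hy a b ha hb hab
  set z := a • x + b • y with hz
  have hzmem : ∀ j, 0 ≤ z j := by
    intro j
    have := add_nonneg (mul_nonneg ha (hx j)) (mul_nonneg hb (hy j))
    simpa [hz] using this
  have hkey : ∀ ε : ℝ, 0 < ε →
      f (z + ε • 1) ≤ a * f (x + ε • 1) + b * f (y + ε • 1) := by
    intro ε hε
    have hxm : (x + ε • 1) ∈ {x : Fin m → ℝ | ∀ j, 0 < x j} := by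
      intro j
      simp only [Pi.add_apply, Pi.smul_apply, Pi.one_apply, smul_eq_mul, mul_one]
      exact add_pos_of_nonneg_of_pos (hx j) hε
    have hym : (y + ε • 1) ∈ {x : Fin m → ℝ | ∀ j, 0 < x j} := by
      intro j
      simp only [Pi.add_apply, Pi.smul_apply, Pi.one_apply, smul_eq_mul, mul_one]
      exact add_pos_of_nonneg_of_pos (hy j) hε
    have := hf.2 hxm hym ha hb hab
    have hcomb : a • (x + ε • (1 : Fin m → ℝ)) + b • (y + ε • 1) = z + ε • 1 := by
      funext j
      simp only [hz, Pi.add_apply, Pi.smul_apply, Pi.one_apply, smul_eq_mul, mul_one]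
      linear_combination ε * hab
    rw [hcomb] at this
    simpa [smul_eq_mul] using this
  have hlim : Tendsto (fun ε : ℝ => a * f (x + ε • 1) + b * f (y + ε • 1) - f (z + ε • 1))
      (𝓝[>] (0:ℝ)) (𝓝 (a * f x + b * f y - f z)) :=
    (((tendsto_const_nhds.mul (hT x hx)).add (tendsto_const_nhds.mul (hT y hy))).sub
      (hT z hzmem))
  have hge : 0 ≤ a * f x + b * f y - f z := by
    refine ge_of_tendsto hlim ?_
    filter_upwards [self_mem_nhdsWithin] with ε (hε : 0 < ε)
    have := hkey ε hε
    linarith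
  simp only [smul_eq_mul]
  linarith


theorem stmt18 (n m : ℕ) (hn : 2 ≤ n) (hm : 2 ≤ m) (q : ℝ) (hq : 0 < q)
    (φ : (Fin m → ℝ) → ℝ)
    (hφc : ContinuousOn φ {x : Fin m → ℝ | ∀ j, 0 ≤ x j})
    (hφmono : ∀ x : Fin m → ℝ, (∀ j, 0 ≤ x j) → ∀ j, ∀ t : ℝ, x j < t →
      φ x < φ (Function.update x j t))
    (hφ0 : φ 0 = 0)
    (hφe : ∀ j : Fin m, φ (fun k => if k = j then 1 else 0) = 1)
    (hφtop : ∀ x : Fin m → ℝ, (∀ j, 0 ≤ x j) → x ≠ 0 →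
      Tendsto (fun t : ℝ => φ (t • x)) atTop atTop)
    (hφq : ConvexOn ℝ {x : Fin m → ℝ | ∀ j, 0 < x j}
      (fun x : Fin m → ℝ => φ (fun j => x j ^ (1/q))))
    (G : ℝ → Euc n → ℝ)
    (hGcont : ContinuousOn (fun p : ℝ × Euc n => G p.1 p.2) (Ioi 0 ×ˢ usphere n))
    (hGpos : ∀ t > (0:ℝ), ∀ u ∈ usphere n, 0 < G t u)
    (hGq : ∀ u ∈ usphere n, ∀ s t : ℝ, 0 < s → s ≤ t → G s u / s ^ q ≤ G t u / t ^ q)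
    (ρ : Fin m → Euc n → ℝ)
    (hρc : ∀ j, ContinuousOn (ρ j) (usphere n))
    (hρpos : ∀ j, ∀ u ∈ usphere n, 0 < ρ j u)
    (ρS : Euc n → ℝ) (hρSc : ContinuousOn ρS (usphere n))
    (hρSpos : ∀ u ∈ usphere n, 0 < ρS u)
    (hsum : ∀ u ∈ usphere n, φ (fun j => ρ j u / ρS u) = 1) :
    1 ≥ φ (fun j => ((∫ u, G (ρ j u) u ∂smeas n) / (∫ u, G (ρS u) u ∂smeas n)) ^ (1/q)) := by
  classical
  set μ := smeas n with hμdef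
  have hμr : μ = (μH[(n : ℝ) - 1]).restrict (usphere n) := rfl
  set V := ∫ u, G (ρS u) u ∂μ with hVdef
  have hSmeas : MeasurableSet (usphere n) := Metric.isClosed_sphere.measurableSet
  have hSae : ∀ᵐ u ∂μ, u ∈ usphere n := by rw [hμr]; exact ae_restrict_mem hSmeas
  have hposS : ∀ u ∈ usphere n, 0 < G (ρS u) u := fun u hu => hGpos _ (hρSpos u hu) u hu
  -- trivial case `V = 0`
  by_cases hVpos : 0 < V
  swap
  · have hV0 : V = 0 := by
      refine le_antisymm (not_lt.1 hVpos) ?_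
      by_cases hi : Integrable (fun u => G (ρS u) u) μ
      · exact integral_nonneg_of_ae (hSae.mono fun u hu => (hposS u hu).le)
      · rw [hVdef, integral_undef hi]
    have hzero : (fun j => ((∫ u, G (ρ j u) u ∂μ) / V) ^ (1/q)) = (0 : Fin m → ℝ) := by
      funext j
      rw [hV0, div_zero, Real.zero_rpow (by positivity)]
      rfl
    rw [hzero, hφ0]
    norm_num
  -- main case
  have hVi : Integrable (fun u => G (ρS u) u) μ := by
    by_contra h
    rw [hVdef, integral_undef h] at hVpos
    exact lt_irrefl 0 hVpos
  -- continuity of G along ρS on the sphere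
  have hGρS : ContinuousOn (fun u => G (ρS u) u) (usphere n) := by
    refine hGcont.comp (hρSc.prodMk continuousOn_id) ?_
    intro u hu
    exact Set.mk_mem_prod (hρSpos u hu) hu
  -- the sphere has finite measure
  haveI hμfin : IsFiniteMeasure μ := by
    haveI : Nontrivial (Euc n) := by
      refine ⟨EuclideanSpace.single ⟨0, by omega⟩ 1, 0, ?_⟩
      intro h
      have := congrArg (fun v : Euc n => v ⟨0, by omega⟩) h
      simp at this
    have hne : (usphere n).Nonempty := NormedSpace.sphere_nonempty.2 zero_le_one
    obtain ⟨u₀, hu₀, hmin⟩ := (isCompact_sphere (0 : Euc n) 1).exists_isMinOn hne hGρS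
    set c := G (ρS u₀) u₀ with hc
    have hcpos : 0 < c := hposS u₀ hu₀
    have hcb : ∀ u ∈ usphere n, c ≤ G (ρS u) u := fun u hu => hmin hu
    have h1 : ENNReal.ofReal c * μ Set.univ ≤ ∫⁻ u, ‖G (ρS u) u‖₊ ∂μ := by
      rw [← lintegral_const]
      refine lintegral_mono_ae (hSae.mono fun u hu => ?_)
      rw [show ((‖G (ρS u) u‖₊ : ℝ≥0∞)) = ENNReal.ofReal ‖G (ρS u) u‖ from (ofReal_norm _).symm]
      exact ENNReal.ofReal_le_ofReal ((hcb u hu).trans (le_abs_self _))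
    have h2 : ∫⁻ u, ‖G (ρS u) u‖₊ ∂μ < ⊤ := hVi.2
    refine ⟨ENNReal.lt_top_of_mul_ne_top_right (h1.trans_lt h2).ne ?_⟩
    simp [ENNReal.ofReal_eq_zero, not_le, hcpos]
  -- Step 1: the radial functions are dominated by ρS on the sphere
  have hratio : ∀ j, ∀ u ∈ usphere n, ρ j u ≤ ρS u := by
    intro j u hu
    by_contra h
    push_neg at h
    set x : Fin m → ℝ := fun k => ρ k u / ρS u with hx
    have hxpos : ∀ k, 0 < x k := fun k => div_pos (hρpos k u hu) (hρSpos u hu)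
    have h1 : (1:ℝ) < x j := (one_lt_div (hρSpos u hu)).2 h
    have hlt : φ (fun k => if k = j then (1:ℝ) else 0) < φ x := by
      refine phi_lt_of_lt hφmono ?_ ?_ j ?_
      · intro k; split <;> norm_num
      · intro k
        by_cases hk : k = j
        · simp only [hk, if_pos rfl]; exact h1.le
        · simp only [hk, if_neg hk]; exact (hxpos k).le
      · simp only [if_pos rfl]; exact h1
    rw [hφe j, hsum u hu] at hlt
    exact lt_irrefl 1 hlt
  -- the weighted measure
  set d : Euc n → ℝ≥0 := fun u => Real.toNNReal (G (ρS u) u) with hd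
  have hGSm : AEStronglyMeasurable (fun u => G (ρS u) u) μ := by
    rw [hμr]; exact hGρS.aestronglyMeasurable hSmeas
  have hdmeas : AEMeasurable d μ :=
    measurable_real_toNNReal.comp_aemeasurable hGSm.aemeasurable
  set ν : Measure (Euc n) := μ.withDensity (fun u => (d u : ℝ≥0∞)) with hν
  have hac : ν ≪ μ := withDensity_absolutelyContinuous _ _
  have hSaeν : ∀ᵐ u ∂ν, u ∈ usphere n := hac.ae_le hSae
  have hνuniv : ν Set.univ = ENNReal.ofReal V := by
    rw [hν, withDensity_apply _ MeasurableSet.univ, setLIntegral_univ]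
    rw [hVdef, ofReal_integral_eq_lintegral_ofReal hVi
      (hSae.mono fun u hu => (hposS u hu).le)]
    rfl
  haveI : IsFiniteMeasure ν := ⟨by rw [hνuniv]; exact ENNReal.ofReal_lt_top⟩
  haveI : NeZero ν := by
    refine ⟨fun h0 => ?_⟩
    rw [h0] at hνuniv
    simp only [Measure.coe_zero, Pi.zero_apply] at hνuniv
    exact absurd hνuniv.symm (ENNReal.ofReal_pos.2 hVpos).ne'
  -- the function g
  set g : Euc n → (Fin m → ℝ) := fun u => fun j => (ρ j u / ρS u) ^ q with hg
  have hgmeas : AEStronglyMeasurable g μ := by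
    rw [hμr]
    refine ContinuousOn.aestronglyMeasurable ?_ hSmeas
    refine continuousOn_pi.2 fun j => ?_
    exact ((hρc j).div hρSc (fun u hu => (hρSpos u hu).ne')).rpow_const
      (fun u hu => Or.inr hq.le)
  have hgmeasν : AEStronglyMeasurable g ν := hgmeas.mono_ac hac
  have hgnn : ∀ u ∈ usphere n, ∀ j, 0 ≤ g u j := fun u hu j =>
    Real.rpow_nonneg (div_nonneg (hρpos j u hu).le (hρSpos u hu).le) q
  have hgle1 : ∀ u ∈ usphere n, ∀ j, g u j ≤ 1 := by
    intro u hu j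
    refine Real.rpow_le_one (div_nonneg (hρpos j u hu).le (hρSpos u hu).le) ?_ hq.le
    exact div_le_one_of_le₀ (hratio j u hu) (hρSpos u hu).le
  have hgint : Integrable g ν := by
    refine Integrable.mono' (integrable_const (1:ℝ)) hgmeasν ?_
    filter_upwards [hSaeν] with u hu
    refine (pi_norm_le_iff_of_nonneg zero_le_one).2 fun j => ?_
    rw [Real.norm_eq_abs, abs_of_nonneg (hgnn u hu j)]
    exact hgle1 u hu j
  -- the function f = φ_q
  set f : (Fin m → ℝ) → ℝ := fun x => φ (fun j => x j ^ (1/q)) with hf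
  have hfcont : ContinuousOn f {x : Fin m → ℝ | ∀ j, 0 ≤ x j} := by
    have hr : Continuous (fun x : Fin m → ℝ => fun j => x j ^ (1/q)) := by
      refine continuous_pi fun j => ?_
      have hone : Continuous (fun t : ℝ => t ^ (1/q)) := by
        rw [continuous_iff_continuousAt]
        intro t
        exact Real.continuousAt_rpow_const t _ (Or.inr (by positivity))
      exact hone.comp (continuous_apply j)
    refine hφc.comp hr.continuousOn ?_
    intro x hx j
    exact Real.rpow_nonneg (hx j) _
  have hfconv : ConvexOn ℝ {x : Fin m → ℝ | ∀ j, 0 ≤ x j} f :=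
    convexOn_nonneg_of_pos hfcont hφq
  have hclosed : IsClosed {x : Fin m → ℝ | ∀ j, 0 ≤ x j} := by
    have : {x : Fin m → ℝ | ∀ j, 0 ≤ x j} = ⋂ j, {x : Fin m → ℝ | 0 ≤ x j} := by
      ext x; simp [Set.mem_iInter]
    rw [this]
    exact isClosed_iInter fun j => isClosed_le continuous_const (continuous_apply j)
  -- f ∘ g = 1 a.e.
  have hfg1 : (fun u => f (g u)) =ᶠ[ae ν] (fun _ => (1:ℝ)) := by
    filter_upwards [hSaeν] with u hu
    have hcomp : (fun j => (g u j) ^ (1/q)) = fun j => ρ j u / ρS u := by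
      funext j
      have hr0 : 0 ≤ ρ j u / ρS u := div_nonneg (hρpos j u hu).le (hρSpos u hu).le
      rw [hg]
      rw [← Real.rpow_mul hr0, mul_one_div, div_self hq.ne', Real.rpow_one]
    simp only [hf]
    rw [hcomp, hsum u hu]
  have hfgint : Integrable (fun u => f (g u)) ν :=
    (integrable_const (1:ℝ)).congr hfg1.symm
  -- Jensen
  have hgmem : ∀ᵐ u ∂ν, g u ∈ {x : Fin m → ℝ | ∀ j, 0 ≤ x j} :=
    hSaeν.mono fun u hu j => hgnn u hu j
  have jensen := hfconv.map_average_le hfcont hclosed hgmem hgint hfgint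
  have havg1 : ⨍ u, f (g u) ∂ν = 1 := by
    rw [average_congr hfg1, average_const]
  set A := ⨍ u, g u ∂ν with hA
  -- component formula for the average
  have hAj : ∀ j, A j = (ν Set.univ).toReal⁻¹ * ∫ u, g u j ∂ν := by
    intro j
    rw [hA, average_eq]
    simp only [Pi.smul_apply, smul_eq_mul]
    congr 1
    have := (ContinuousLinearMap.proj (R := ℝ) (φ := fun _ : Fin m => ℝ) j).integral_comp_comm
      hgint
    exact (congrArg _ rfl).trans this.symm
  -- integral with density
  have hintj : ∀ j, ∫ u, g u j ∂ν = ∫ u, G (ρS u) u * g u j ∂μ := by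
    intro j
    rw [hν, integral_withDensity_eq_integral_smul₀ hdmeas]
    refine integral_congr_ae (hSae.mono fun u hu => ?_)
    simp only [hd, NNReal.smul_def, Real.coe_toNNReal _ (hposS u hu).le, smul_eq_mul]
  -- pointwise bound and numerator inequality
  have hgjmeas : ∀ j, AEStronglyMeasurable (fun u => g u j) μ := fun j =>
    (continuous_apply j).comp_aestronglyMeasurable hgmeas
  have hRHSint : ∀ j, Integrable (fun u => G (ρS u) u * g u j) μ := by
    intro j
    refine Integrable.mono' hVi.abs (hGSm.mul (hgjmeas j)) ?_
    filter_upwards [hSae] with u hu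
    rw [Real.norm_eq_abs, abs_mul]
    have : |g u j| ≤ 1 := by rw [abs_of_nonneg (hgnn u hu j)]; exact hgle1 u hu j
    calc |G (ρS u) u| * |g u j| ≤ |G (ρS u) u| * 1 :=
          mul_le_mul_of_nonneg_left this (abs_nonneg _)
      _ = |G (ρS u) u| := mul_one _
  have hnum : ∀ j, (∫ u, G (ρ j u) u ∂μ) ≤ ∫ u, G (ρS u) u * g u j ∂μ := by
    intro j
    have hptwise : ∀ᵐ u ∂μ, G (ρ j u) u ≤ G (ρS u) u * g u j := by
      filter_upwards [hSae] with u hu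
      have hs := hρpos j u hu
      have ht := hρSpos u hu
      have hst := hratio j u hu
      have h := hGq u hu (ρ j u) (ρS u) hs hst
      have hgj : g u j = (ρ j u) ^ q / (ρS u) ^ q := Real.div_rpow hs.le ht.le q
      rw [hgj]
      have hsq : (0:ℝ) < (ρ j u) ^ q := Real.rpow_pos_of_pos hs q
      have htq : (0:ℝ) < (ρS u) ^ q := Real.rpow_pos_of_pos ht q
      calc G (ρ j u) u = G (ρ j u) u / (ρ j u) ^ q * (ρ j u) ^ q := by
            field_simp
        _ ≤ G (ρS u) u / (ρS u) ^ q * (ρ j u) ^ q :=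
            mul_le_mul_of_nonneg_right h hsq.le
        _ = G (ρS u) u * ((ρ j u) ^ q / (ρS u) ^ q) := by ring
    by_cases hji : Integrable (fun u => G (ρ j u) u) μ
    · exact integral_mono_ae hji (hRHSint j) hptwise
    · rw [integral_undef hji]
      refine integral_nonneg_of_ae (hSae.mono fun u hu => ?_)
      exact mul_nonneg (hposS u hu).le (hgnn u hu j)
  have hVtoReal : (ν Set.univ).toReal = V := by
    rw [hνuniv, ENNReal.toReal_ofReal hVpos.le]
  have hcomp : ∀ j, (∫ u, G (ρ j u) u ∂μ) / V ≤ A j := by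
    intro j
    rw [hAj j, hintj j, hVtoReal, div_eq_inv_mul]
    exact mul_le_mul_of_nonneg_left (hnum j) (inv_nonneg.2 hVpos.le)
  have hVjnn : ∀ j, 0 ≤ ∫ u, G (ρ j u) u ∂μ := by
    intro j
    by_cases hji : Integrable (fun u => G (ρ j u) u) μ
    · exact integral_nonneg_of_ae (hSae.mono fun u hu => (hGpos _ (hρpos j u hu) u hu).le)
    · rw [integral_undef hji]
  have hfinal : φ (fun j => ((∫ u, G (ρ j u) u ∂μ) / V) ^ (1/q)) ≤ f A := by
    refine phi_le_of_le hφmono ?_ ?_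
    · intro j
      exact Real.rpow_nonneg (div_nonneg (hVjnn j) hVpos.le) _
    · intro j
      exact Real.rpow_le_rpow (div_nonneg (hVjnn j) hVpos.le) (hcomp j) (by positivity)
  have : φ (fun j => ((∫ u, G (ρ j u) u ∂μ) / V) ^ (1/q)) ≤ 1 := by
    calc φ (fun j => ((∫ u, G (ρ j u) u ∂μ) / V) ^ (1/q)) ≤ f A := hfinal
      _ ≤ ⨍ u, f (g u) ∂ν := jensen
      _ = 1 := havg1
  exact this
end
end
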